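/- Let I, J ∈ ℍ satisfy I² = −1, J² = −1 and IJ = −JI. Let q = x + yI with x, y ∈ ℝ, and let α = α₁ + α₂·J and β = β₁ + β₂·J where α₁, α₂, β₁, β₂ lie in the real span of {1, I}. Then Re((α − qαq) · conj(β − qβq)) = ‖1 − q²‖² · Re(α · conj(β)) − 4y² · Re(α₂ · conj(β₂)). -/

import Mathlib

set_option maxHeartbeats 1000000 in
/-- the key slice computation: for `q = x + yI` in the slice `ℂ_I` and
`α = α₁ + α₂J`, `β = β₁ + β₂J` with `α₁, α₂, β₁, β₂ ∈ ℂ_I`,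
`Re((α − qαq) conj(β − qβq)) = ‖1 − q²‖² Re(α conj β) − 4y² Re(α₂ conj β₂)`. -/
theorem slice_decomposition_re (I J : Quaternion ℝ)
    (hI : I ^ 2 = -1) (hJ : J ^ 2 = -1) (hIJ : I * J = -(J * I))
    (x y : ℝ) (α₁ α₂ β₁ β₂ : Quaternion ℝ)
    (hα₁ : α₁ ∈ Submodule.span ℝ ({1, I} : Set (Quaternion ℝ)))
    (hα₂ : α₂ ∈ Submodule.span ℝ ({1, I} : Set (Quaternion ℝ)))
    (hβ₁ : β₁ ∈ Submodule.span ℝ ({1, I} : Set (Quaternion ℝ)))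
    (hβ₂ : β₂ ∈ Submodule.span ℝ ({1, I} : Set (Quaternion ℝ)))
    (q α β : Quaternion ℝ)
    (hq : q = (x : Quaternion ℝ) + y • I)
    (hα : α = α₁ + α₂ * J) (hβ : β = β₁ + β₂ * J) :
    ((α - q * α * q) * star (β - q * β * q)).re =
      ‖1 - q ^ 2‖ ^ 2 * (α * star β).re - 4 * y ^ 2 * (α₂ * star β₂).re := by
  obtain ⟨a, b, ha⟩ := Submodule.mem_span_pair.mp hα₁
  obtain ⟨c, d, hc⟩ := Submodule.mem_span_pair.mp hα₂
  obtain ⟨e, f, he⟩ := Submodule.mem_span_pair.mp hβ₁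
  obtain ⟨g, h, hg⟩ := Submodule.mem_span_pair.mp hβ₂
  have hII : I * I = -1 := by rw [← sq, hI]
  have hJJ : J * J = -1 := by rw [← sq, hJ]
  have hJI : J * I = -(I * J) := by rw [hIJ, neg_neg]
  -- re of I is 0
  have hIre : I.re = 0 := by
    have h1 := congrArg QuaternionAlgebra.re hII
    have h2 := congrArg QuaternionAlgebra.imI hII
    have h3 := congrArg QuaternionAlgebra.imJ hII
    have h4 := congrArg QuaternionAlgebra.imK hII
    simp [Quaternion.re_mul, Quaternion.imI_mul, Quaternion.imJ_mul, Quaternion.imK_mul, Quaternion.re_one, Quaternion.imI_one, Quaternion.imJ_one, Quaternion.imK_one] at h1 h2 h3 h4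
    have key : I.re * (I.re ^ 2 + 1) = 0 := by linear_combination I.re * h1 + (I.imI/2) * h2 + (I.imJ/2) * h3 + (I.imK/2) * h4
    rcases mul_eq_zero.mp key with h' | h'
    · exact h'
    · nlinarith [sq_nonneg I.re]
  have hJre : J.re = 0 := by
    have h1 := congrArg QuaternionAlgebra.re hJJ
    have h2 := congrArg QuaternionAlgebra.imI hJJ
    have h3 := congrArg QuaternionAlgebra.imJ hJJ
    have h4 := congrArg QuaternionAlgebra.imK hJJ
    simp [Quaternion.re_mul, Quaternion.imI_mul, Quaternion.imJ_mul, Quaternion.imK_mul, Quaternion.re_one, Quaternion.imI_one, Quaternion.imJ_one, Quaternion.imK_one] at h1 h2 h3 h4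
    have key : J.re * (J.re ^ 2 + 1) = 0 := by linear_combination J.re * h1 + (J.imI/2) * h2 + (J.imJ/2) * h3 + (J.imK/2) * h4
    rcases mul_eq_zero.mp key with h' | h'
    · exact h'
    · nlinarith [sq_nonneg J.re]
  have sI : star I = -I := by
    ext <;> simp [hIre]
  have sJ : star J = -J := by
    ext <;> simp [hJre]
  have sK : star (I * J) = -(I * J) := by
    rw [star_mul, sI, sJ, neg_mul_neg, hJI]
  have hKre : (I * J).re = 0 := by
    have h0 := congrArg QuaternionAlgebra.re sK
    rw [Quaternion.re_star, Quaternion.re_neg] at h0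
    linarith
  have hIK : I * (I * J) = -J := by rw [← mul_assoc, hII, neg_one_mul]
  have hKI : (I * J) * I = J := by rw [mul_assoc, hJI, mul_neg, hIK, neg_neg]
  have hJK : J * (I * J) = I := by
    rw [← mul_assoc, hJI, neg_mul, mul_assoc, hJJ, mul_neg, mul_one, neg_neg]
  have hKJ : (I * J) * J = -I := by rw [mul_assoc, hJJ, mul_neg, mul_one]
  have hKK : (I * J) * (I * J) = -1 := by rw [mul_assoc, hJK, hII]
  -- canonical-form rewrite lemmas
  have mulB : ∀ a₀ a₁ a₂ a₃ b₀ b₁ b₂ b₃ : ℝ,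
      (a₀ • (1 : Quaternion ℝ) + a₁ • I + a₂ • J + a₃ • (I * J)) *
        (b₀ • (1 : Quaternion ℝ) + b₁ • I + b₂ • J + b₃ • (I * J)) =
      (a₀ * b₀ - a₁ * b₁ - a₂ * b₂ - a₃ * b₃) • (1 : Quaternion ℝ) +
        (a₀ * b₁ + a₁ * b₀ + a₂ * b₃ - a₃ * b₂) • I +
        (a₀ * b₂ - a₁ * b₃ + a₂ * b₀ + a₃ * b₁) • J +
        (a₀ * b₃ + a₁ * b₂ - a₂ * b₁ + a₃ * b₀) • (I * J) := by
    intro a₀ a₁ a₂ a₃ b₀ b₁ b₂ b₃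
    simp only [add_mul, mul_add, smul_mul_assoc, mul_smul_comm, smul_smul, one_mul, mul_one,
      hII, hJJ, hJI, hIK, hKI, hJK, hKJ, hKK, smul_neg]
    module
  have subB : ∀ a₀ a₁ a₂ a₃ b₀ b₁ b₂ b₃ : ℝ,
      (a₀ • (1 : Quaternion ℝ) + a₁ • I + a₂ • J + a₃ • (I * J)) -
        (b₀ • (1 : Quaternion ℝ) + b₁ • I + b₂ • J + b₃ • (I * J)) =
      (a₀ - b₀) • (1 : Quaternion ℝ) + (a₁ - b₁) • I + (a₂ - b₂) • J + (a₃ - b₃) • (I * J) := by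
    intro a₀ a₁ a₂ a₃ b₀ b₁ b₂ b₃
    module
  have starB : ∀ a₀ a₁ a₂ a₃ : ℝ,
      star (a₀ • (1 : Quaternion ℝ) + a₁ • I + a₂ • J + a₃ • (I * J)) =
      (a₀) • (1 : Quaternion ℝ) + (-a₁) • I + (-a₂) • J + (-a₃) • (I * J) := by
    intro a₀ a₁ a₂ a₃
    simp only [star_add, Quaternion.star_smul, star_one, sI, sJ, sK, star_trivial, smul_neg]
    module
  have reB : ∀ a₀ a₁ a₂ a₃ : ℝ,
      (a₀ • (1 : Quaternion ℝ) + a₁ • I + a₂ • J + a₃ • (I * J)).re = a₀ := by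
    intro a₀ a₁ a₂ a₃
    simp [Quaternion.re_add, Quaternion.re_smul, Quaternion.re_one, hIre, hJre, hKre]
  -- canonical forms of the data
  have hαf : α = a • (1 : Quaternion ℝ) + b • I + c • J + d • (I * J) := by
    rw [hα, ← ha, ← hc, add_mul, smul_mul_assoc, smul_mul_assoc, one_mul]
    module
  have hβf : β = e • (1 : Quaternion ℝ) + f • I + g • J + h • (I * J) := by
    rw [hβ, ← he, ← hg, add_mul, smul_mul_assoc, smul_mul_assoc, one_mul]
    module
  have hα₂f : α₂ = c • (1 : Quaternion ℝ) + d • I + (0:ℝ) • J + (0:ℝ) • (I * J) := by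
    rw [← hc]; module
  have hβ₂f : β₂ = g • (1 : Quaternion ℝ) + h • I + (0:ℝ) • J + (0:ℝ) • (I * J) := by
    rw [← hg]; module
  have hqf : q = x • (1 : Quaternion ℝ) + y • I + (0:ℝ) • J + (0:ℝ) • (I * J) := by
    rw [hq]
    have : (x : Quaternion ℝ) = x • (1 : Quaternion ℝ) := by
      ext <;> simp [Quaternion.re_one, Quaternion.imI_one, Quaternion.imJ_one, Quaternion.imK_one]
    rw [this]; module
  have honef : (1 : Quaternion ℝ) =
      (1:ℝ) • (1 : Quaternion ℝ) + (0:ℝ) • I + (0:ℝ) • J + (0:ℝ) • (I * J) := by module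
  have hnorm : ‖1 - q ^ 2‖ ^ 2 = ((1 - q ^ 2) * star (1 - q ^ 2)).re := by
    rw [Quaternion.self_mul_star, Quaternion.re_coe,
      Quaternion.normSq_eq_norm_mul_self, sq]
  rw [hnorm, sq]
  rw [hαf, hβf, hα₂f, hβ₂f, hqf]
  rw [show (1 : Quaternion ℝ) - (x • (1 : Quaternion ℝ) + y • I + (0:ℝ) • J + (0:ℝ) • (I * J)) *
      (x • (1 : Quaternion ℝ) + y • I + (0:ℝ) • J + (0:ℝ) • (I * J)) =
      ((1:ℝ) • (1 : Quaternion ℝ) + (0:ℝ) • I + (0:ℝ) • J + (0:ℝ) • (I * J)) -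
      (x • (1 : Quaternion ℝ) + y • I + (0:ℝ) • J + (0:ℝ) • (I * J)) *
      (x • (1 : Quaternion ℝ) + y • I + (0:ℝ) • J + (0:ℝ) • (I * J)) from by rw [← honef]]
  simp only [mulB, subB, starB, mulB, subB, starB, mulB, reB]
  ring
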